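/- Let D₁,…,D₂ₙ be growing disks where for 1 ≤ i ≤ n, disk Dᵢ is centered at (2i, 0) with growth rate 1, and disk D_{n+i} is centered at (2i, 1) with growth rate v_{n+i} > 1. Then for each 1 ≤ i ≤ n, disk D_{n+i} is eliminated by disk Dᵢ at time t_{n+i} = 1/(1 + v_{n+i}) < 1/2, and every Dᵢ with i ≤ n survives until time 1/2; consequently the elimination order of D_{n+1},…,D_{2n} lists the rates v_{n+1},…,v_{2n} in decreasing order. -/

import Mathlib

open scoped Classical

/-- The elimination-time recursion for growing disks. -/
def ElimSpec (t : ℕ → ℕ → ℝ) (el : ℕ → EReal) : Prop :=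
  ∀ i, el i =
    ((Finset.Ico 1 i).filter (fun j => ((t i j : ℝ) : EReal) ≤ el j)).inf
      (fun j => ((t i j : ℝ) : EReal))

/-- the sorting construction. Disk `i` (for `1 ≤ i ≤ n`) is centered
at `(2i, 0)` with rate `1`; disk `n+i` is centered at `(2i, 1)` with rate
`v_{n+i} > 1`. Then each `D_{n+i}` is eliminated by `D_i` at time
`1/(1 + v_{n+i}) < 1/2`, every `D_i` with `i ≤ n` survives until time `1/2`, and
the elimination order of `D_{n+1}, …, D_{2n}` lists the rates in decreasing
order. (The plane is modelled as `ℂ`.) -/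
theorem stmt6 (n : ℕ) (p : ℕ → ℂ) (v : ℕ → ℝ)
    (hp₁ : ∀ i, 1 ≤ i → i ≤ n → p i = ((2 * i : ℝ) : ℂ))
    (hp₂ : ∀ i, 1 ≤ i → i ≤ n → p (n + i) = ((2 * i : ℝ) : ℂ) + Complex.I)
    (hv₁ : ∀ i, 1 ≤ i → i ≤ n → v i = 1)
    (hv₂ : ∀ i, 1 ≤ i → i ≤ n → 1 < v (n + i))
    (el : ℕ → EReal)
    (hel : ElimSpec (fun i j => dist (p i) (p j) / (v i + v j)) el) :
    (∀ i, 1 ≤ i → i ≤ n →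
      el (n + i) = ((1 / (1 + v (n + i)) : ℝ) : EReal) ∧
      el (n + i) = ((dist (p (n + i)) (p i) / (v (n + i) + v i) : ℝ) : EReal) ∧
      1 / (1 + v (n + i)) < (1 : ℝ) / 2) ∧
    (∀ i, 1 ≤ i → i ≤ n → (((1 : ℝ) / 2 : ℝ) : EReal) ≤ el i) ∧
    (∀ i j, 1 ≤ i → i ≤ n → 1 ≤ j → j ≤ n →
      (el (n + i) < el (n + j) ↔ v (n + j) < v (n + i))) := by
  classical
  -- every low disk survives until time 1
  have key1 : ∀ i, 1 ≤ i → i ≤ n → ((1 : ℝ) : EReal) ≤ el i := by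
    intro i h1 h2
    rw [hel i]
    apply Finset.le_inf
    intro j hj
    simp only [Finset.mem_filter, Finset.mem_Ico] at hj
    obtain ⟨⟨hj1, hji⟩, -⟩ := hj
    have hjn : j ≤ n := le_trans (Nat.le_of_lt hji) h2
    rw [EReal.coe_le_coe_iff]
    beta_reduce
    rw [hp₁ i h1 h2, hp₁ j hj1 hjn, hv₁ i h1 h2, hv₁ j hj1 hjn, Complex.dist_eq,
      show ((2 * (i:ℝ) : ℝ) : ℂ) - ((2 * (j:ℝ) : ℝ) : ℂ) = ((2 * (i:ℝ) - 2 * j : ℝ) : ℂ) by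
        push_cast; ring,
      Complex.norm_real, Real.norm_eq_abs]
    have hji' : (j : ℝ) + 1 ≤ i := by exact_mod_cast hji
    rw [abs_of_nonneg (by linarith), le_div_iff₀ (by norm_num : (0:ℝ) < 1 + 1)]
    linarith
  have key2 : ∀ i, 1 ≤ i → i ≤ n →
      el (n + i) = ((1 / (1 + v (n + i)) : ℝ) : EReal) := by
    intro i
    induction i using Nat.strong_induction_on with
    | _ i IH =>
    intro h1 h2
    have hvI : 1 < v (n + i) := hv₂ i h1 h2
    have hdist_i : dist (p (n + i)) (p i) = 1 := by
      rw [hp₂ i h1 h2, hp₁ i h1 h2, Complex.dist_eq]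
      simp
    rw [hel (n + i)]
    apply le_antisymm
    · have hmem : i ∈ (Finset.Ico 1 (n + i)).filter
          (fun j => ((dist (p (n + i)) (p j) / (v (n + i) + v j) : ℝ) : EReal) ≤ el j) := by
        simp only [Finset.mem_filter, Finset.mem_Ico]
        refine ⟨⟨h1, by omega⟩, ?_⟩
        refine le_trans ?_ (key1 i h1 h2)
        rw [EReal.coe_le_coe_iff]
        beta_reduce
        rw [hdist_i, hv₁ i h1 h2, div_le_one (by linarith)]
        linarith
      refine le_trans (Finset.inf_le hmem) ?_
      rw [EReal.coe_le_coe_iff]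
      beta_reduce
      rw [hdist_i, hv₁ i h1 h2, add_comm]
    · apply Finset.le_inf
      intro j hj
      simp only [Finset.mem_filter, Finset.mem_Ico] at hj
      obtain ⟨⟨hj1, hji⟩, hcond⟩ := hj
      by_cases hjn : j ≤ n
      · rw [EReal.coe_le_coe_iff]
        beta_reduce
        rw [hv₁ j hj1 hjn]
        have hd : 1 ≤ dist (p (n + i)) (p j) := by
          rw [hp₂ i h1 h2, hp₁ j hj1 hjn, Complex.dist_eq]
          have h := Complex.abs_im_le_norm (((2 * i : ℝ) : ℂ) + Complex.I - ((2 * j : ℝ) : ℂ))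
          simpa using h
        rw [div_le_div_iff₀ (by linarith) (by linarith)]
        nlinarith [hd]
      · push_neg at hjn
        set k := j - n with hk
        have hjk : j = n + k := by omega
        have hk1 : 1 ≤ k := by omega
        have hki : k < i := by omega
        have hkn : k ≤ n := by omega
        have hvK : 1 < v (n + k) := hv₂ k hk1 hkn
        have hek : el (n + k) = ((1 / (1 + v (n + k)) : ℝ) : EReal) :=
          IH k hki hk1 hkn
        have hdk : dist (p (n + i)) (p (n + k)) = 2 * (i : ℝ) - 2 * k := by
          rw [hp₂ i h1 h2, hp₂ k hk1 hkn, Complex.dist_eq]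
          have : ((2 * i : ℝ) : ℂ) + Complex.I - (((2 * k : ℝ) : ℂ) + Complex.I)
              = ((2 * (i : ℝ) - 2 * k : ℝ) : ℂ) := by push_cast; ring
          rw [this, Complex.norm_real, Real.norm_eq_abs, abs_of_nonneg]
          have : (k : ℝ) < i := by exact_mod_cast hki
          linarith
        rw [hjk] at hcond
        rw [hek, EReal.coe_le_coe_iff, hdk] at hcond
        rw [hjk, EReal.coe_le_coe_iff]
        beta_reduce
        rw [hdk]
        set vi := v (n + i)
        set vk := v (n + k)
        have hc : (2 : ℝ) ≤ 2 * (i : ℝ) - 2 * k := by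
          have : (k : ℝ) + 1 ≤ i := by exact_mod_cast hki
          linarith
        rw [div_le_div_iff₀ (by linarith) (by linarith)] at hcond
        rw [div_le_div_iff₀ (by linarith) (by linarith)]
        nlinarith [hcond, hc, hvI, hvK]
  refine ⟨?_, ?_, ?_⟩
  · intro i h1 h2
    have hvI : 1 < v (n + i) := hv₂ i h1 h2
    have hdist_i : dist (p (n + i)) (p i) = 1 := by
      rw [hp₂ i h1 h2, hp₁ i h1 h2, Complex.dist_eq]
      simp
    refine ⟨key2 i h1 h2, ?_, ?_⟩
    · rw [key2 i h1 h2, EReal.coe_eq_coe_iff, hdist_i, hv₁ i h1 h2, add_comm]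
    · rw [div_lt_div_iff₀ (by linarith) (by norm_num)]
      linarith
  · intro i h1 h2
    refine le_trans ?_ (key1 i h1 h2)
    rw [EReal.coe_le_coe_iff]
    norm_num
  · intro i j h1i h2i h1j h2j
    have hvI : 1 < v (n + i) := hv₂ i h1i h2i
    have hvJ : 1 < v (n + j) := hv₂ j h1j h2j
    rw [key2 i h1i h2i, key2 j h1j h2j, EReal.coe_lt_coe_iff,
      div_lt_div_iff₀ (by linarith) (by linarith)]
    constructor <;> intro h <;> nlinarith
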